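/- Let A ∈ M_n(ℂ) be a nonzero normal matrix whose only (possibly repeated) eigenvalues are 0 and a single nonzero value λ. Then F_N(A) is the half-open line segment (0, λ/|λ|] = {t·λ/|λ| : 0 < t ≤ 1}. -/

import Mathlib

open Matrix ContinuousLinearMap
open scoped InnerProductSpace

noncomputable def fN {n : ℕ} (A : Matrix (Fin n) (Fin n) ℂ)
    (x : EuclideanSpace ℂ (Fin n)) : ℂ :=
  (inner ℂ x (Matrix.toEuclideanLin A x) : ℂ) /
    ((‖x‖ * ‖Matrix.toEuclideanLin A x‖ : ℝ) : ℂ)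

noncomputable def FN {n : ℕ} (A : Matrix (Fin n) (Fin n) ℂ) : Set ℂ :=
  {z | ∃ x : EuclideanSpace ℂ (Fin n), Matrix.toEuclideanLin A x ≠ 0 ∧ z = fN A x}

-- adjoint kills kernel vectors of a normal operator
lemma adj_zero {n : ℕ} (T : EuclideanSpace ℂ (Fin n) →L[ℂ] EuclideanSpace ℂ (Fin n))
    (hT : IsStarNormal T) {u : EuclideanSpace ℂ (Fin n)} (hu : T u = 0) :
    ContinuousLinearMap.adjoint T u = 0 := by
  have hc : T * ContinuousLinearMap.adjoint T = ContinuousLinearMap.adjoint T * T := by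
    have h := hT.star_comm_self.eq
    rwa [ContinuousLinearMap.star_eq_adjoint, eq_comm] at h
  have h : (inner ℂ (ContinuousLinearMap.adjoint T u) (ContinuousLinearMap.adjoint T u) : ℂ) = 0 := by
    rw [ContinuousLinearMap.adjoint_inner_left]
    have : T (ContinuousLinearMap.adjoint T u) = ContinuousLinearMap.adjoint T (T u) := by
      have := congrArg (fun f => f u) hc
      simpa [ContinuousLinearMap.mul_apply] using this
    rw [this, hu, map_zero, inner_zero_right]
  exact inner_self_eq_zero.mp h

lemma orth_ker_eig {n : ℕ} (T : EuclideanSpace ℂ (Fin n) →L[ℂ] EuclideanSpace ℂ (Fin n))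
    (hT : IsStarNormal T) (lam : ℂ) (hlam : lam ≠ 0)
    {u w : EuclideanSpace ℂ (Fin n)} (hu : T u = 0) (hw : T w = lam • w) :
    (inner ℂ u w : ℂ) = 0 := by
  have h1 : (inner ℂ u (T w) : ℂ) = 0 := by
    rw [← ContinuousLinearMap.adjoint_inner_left, adj_zero T hT hu, inner_zero_left]
  rw [hw, inner_smul_right] at h1
  exact (mul_eq_zero.mp h1).resolve_left hlam

lemma key {n : ℕ} (A : Matrix (Fin n) (Fin n) ℂ) (lam : ℂ) (hlam : lam ≠ 0)
    {u v : EuclideanSpace ℂ (Fin n)} (huv : (inner ℂ u v : ℂ) = 0) (hv : v ≠ 0)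
    (hx : u + v ≠ 0)
    (hTx : Matrix.toEuclideanLin A (u + v) = lam • v) :
    fN A (u + v) = ((‖v‖ / ‖u + v‖ : ℝ) : ℂ) * (lam / ((‖lam‖ : ℝ) : ℂ)) := by
  have hvn : ‖v‖ ≠ 0 := norm_ne_zero_iff.mpr hv
  have hxn : ‖u + v‖ ≠ 0 := norm_ne_zero_iff.mpr hx
  have habs : (‖lam‖ : ℝ) ≠ 0 := norm_ne_zero_iff.mpr hlam
  have hinner : (inner ℂ (u + v) (lam • v) : ℂ) = lam * (‖v‖ : ℂ) ^ 2 := by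
    rw [inner_smul_right, inner_add_left, huv, zero_add, inner_self_eq_norm_sq_to_K]
    norm_cast
  have hnorm : ‖(lam • v : EuclideanSpace ℂ (Fin n))‖ = ‖lam‖ * ‖v‖ := by
    rw [norm_smul]
  have h1 : (‖v‖ : ℂ) ≠ 0 := by exact_mod_cast hvn
  have h2 : (‖u + v‖ : ℂ) ≠ 0 := by exact_mod_cast hxn
  have h3 : ((‖lam‖ : ℝ) : ℂ) ≠ 0 := by exact_mod_cast habs
  unfold fN
  rw [hTx, hinner, hnorm]
  push_cast
  field_simp

lemma aux_t {t : ℝ} (ht0 : 0 < t) (ht1 : t ≤ 1) (c : ℝ) :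
    (c * Real.sqrt (1 / t ^ 2 - 1)) ^ 2 + c ^ 2 = (c / t) ^ 2 := by
  have h4 : t ^ 2 ≤ 1 := by nlinarith
  have h5 : (0:ℝ) < t ^ 2 := by positivity
  have hnn : 0 ≤ 1 / t ^ 2 - 1 := by
    have : 1 ≤ 1 / t ^ 2 := (le_div_iff₀ h5).mpr (by linarith)
    linarith
  rw [mul_pow, Real.sq_sqrt hnn, div_pow]
  field_simp
  ring

lemma sq_eq' {X Y : ℝ} (hX : 0 ≤ X) (hY : 0 ≤ Y) (h : X ^ 2 = Y ^ 2) : X = Y := by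
  calc X = Real.sqrt (X ^ 2) := (Real.sqrt_sq hX).symm
  _ = Real.sqrt (Y ^ 2) := by rw [h]
  _ = Y := Real.sqrt_sq hY

lemma div_self_div' {c t : ℝ} (hc : c ≠ 0) (ht : t ≠ 0) : c / (c / t) = t := by
  field_simp

theorem stmt17 {n : ℕ} (A : Matrix (Fin n) (Fin n) ℂ) (hA : IsStarNormal A)
    (lam : ℂ) (hlam : lam ≠ 0) (hspec : spectrum ℂ A = {0, lam}) :
    FN A = {z : ℂ | ∃ t : ℝ, 0 < t ∧ t ≤ 1 ∧
      z = (t : ℂ) * (lam / ((‖lam‖ : ℝ) : ℂ))} := by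
  set T := Matrix.toEuclideanCLM (𝕜 := ℂ) A with hTdef
  haveI hTn : IsStarNormal T := IsStarNormal.map (Matrix.toEuclideanCLM (𝕜 := ℂ)) A
  have hTA : ∀ x : EuclideanSpace ℂ (Fin n), Matrix.toEuclideanLin A x = T x := fun _ => rfl
  have hspecT : spectrum ℂ T = {0, lam} := by
    rw [hTdef, AlgEquiv.spectrum_eq (Matrix.toEuclideanCLM (𝕜 := ℂ)) A, hspec]
  -- T * T = lam • T
  have hT2 : T * T = lam • T := by
    have hcongr : cfc (fun z : ℂ => z * z) T = cfc (fun z : ℂ => lam * z) T := by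
      apply cfc_congr
      intro z hz
      rw [hspecT] at hz
      rcases hz with rfl | hz
      · simp
      · simp only [Set.mem_singleton_iff] at hz
        subst hz; ring
    rwa [cfc_mul _ _ T, cfc_id' ℂ T, cfc_const_mul_id lam T] at hcongr
  -- orthogonal decomposition norm
  have hpyth : ∀ u v : EuclideanSpace ℂ (Fin n), (inner ℂ u v : ℂ) = 0 →
      ‖u + v‖ ^ 2 = ‖u‖ ^ 2 + ‖v‖ ^ 2 := by
    intro u v huv
    rw [@norm_add_sq ℂ _ _ _ _ u v, huv]
    simp
  ext z
  simp only [FN, Set.mem_setOf_eq]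
  constructor
  · rintro ⟨x, hx, rfl⟩
    rw [hTA] at hx
    set v : EuclideanSpace ℂ (Fin n) := lam⁻¹ • T x with hvdef
    have hTxv : T x = lam • v := by
      rw [hvdef, smul_smul, mul_inv_cancel₀ hlam, one_smul]
    have hv : v ≠ 0 := by
      intro h; apply hx; rw [hTxv, h, smul_zero]
    set u : EuclideanSpace ℂ (Fin n) := x - v with hudef
    have huv : u + v = x := sub_add_cancel x v
    have hTu : T u = 0 := by
      have hTv : T v = T x := by
        rw [hvdef, _root_.map_smul]
        have : T (T x) = lam • T x := by
          have := congrArg (fun f => f x) hT2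
          simpa [ContinuousLinearMap.mul_apply] using this
        rw [this, smul_smul, inv_mul_cancel₀ hlam, one_smul]
      rw [hudef, map_sub, hTv, sub_self]
    have horth : (inner ℂ u v : ℂ) = 0 := by
      rw [hvdef, inner_smul_right]
      have : (inner ℂ u (T x) : ℂ) = 0 := by
        rw [← ContinuousLinearMap.adjoint_inner_left, adj_zero T hTn hTu, inner_zero_left]
      rw [this, mul_zero]
    have hxne : x ≠ 0 := by intro h; apply hx; rw [h, map_zero]
    have hfN := key A lam hlam horth hv (huv.symm ▸ hxne) (by rw [hTA, huv, hTxv])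
    rw [huv] at hfN
    refine ⟨‖v‖ / ‖x‖, ?_, ?_, ?_⟩
    · exact div_pos (norm_pos_iff.mpr hv) (norm_pos_iff.mpr hxne)
    · rw [div_le_one (norm_pos_iff.mpr hxne)]
      have h2 := hpyth u v horth
      rw [huv] at h2
      nlinarith [norm_nonneg u, norm_nonneg v, norm_nonneg x]
    · exact hfN
  · rintro ⟨t, ht0, ht1, rfl⟩
    -- kernel vector
    obtain ⟨u0, hu0ne, hu0⟩ : ∃ u0 : Fin n → ℂ, u0 ≠ 0 ∧ A *ᵥ u0 = 0 := by
      have h0 : (0 : ℂ) ∈ spectrum ℂ A := by rw [hspec]; left; rfl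
      rw [spectrum.mem_iff] at h0
      simp only [map_zero, zero_sub] at h0
      have hdet : A.det = 0 := by
        by_contra hd
        exact h0 (IsUnit.neg ((Matrix.isUnit_iff_isUnit_det A).mpr (isUnit_iff_ne_zero.mpr hd)))
      obtain ⟨u0, hu0ne, hu0⟩ := (Matrix.exists_mulVec_eq_zero_iff).mpr hdet
      exact ⟨u0, hu0ne, hu0⟩
    -- eigenvector
    obtain ⟨w0, hw0ne, hw0⟩ : ∃ w0 : Fin n → ℂ, w0 ≠ 0 ∧ A *ᵥ w0 = lam • w0 := by
      have h0 : lam ∈ spectrum ℂ A := by rw [hspec]; right; rfl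
      rw [spectrum.mem_iff] at h0
      have hdet : (Matrix.scalar (Fin n) lam - A).det = 0 := by
        by_contra hd
        exact h0 ((Matrix.isUnit_iff_isUnit_det _).mpr (isUnit_iff_ne_zero.mpr hd))
      obtain ⟨w0, hw0ne, hw0⟩ := (Matrix.exists_mulVec_eq_zero_iff).mpr hdet
      refine ⟨w0, hw0ne, ?_⟩
      rw [Matrix.sub_mulVec] at hw0
      have : (Matrix.scalar (Fin n) lam) *ᵥ w0 = lam • w0 := by
        funext i
        simp [Matrix.scalar, Matrix.mulVec_diagonal]
      rw [this] at hw0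
      linear_combination (norm := module) -hw0
    set u' : EuclideanSpace ℂ (Fin n) := (WithLp.equiv 2 (Fin n → ℂ)).symm u0 with hu'def
    set w' : EuclideanSpace ℂ (Fin n) := (WithLp.equiv 2 (Fin n → ℂ)).symm w0 with hw'def
    have hTu' : T u' = 0 := by
      rw [hu'def, hTdef]
      show WithLp.toLp 2 (A *ᵥ u0) = _
      rw [hu0]
      rfl
    have hTw' : T w' = lam • w' := by
      rw [hw'def, hTdef]
      show WithLp.toLp 2 (A *ᵥ w0) = _
      rw [hw0]
      rfl
    have hu'ne : u' ≠ 0 := by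
      simpa [hu'def] using hu0ne
    have hw'ne : w' ≠ 0 := by
      simpa [hw'def] using hw0ne
    have horth0 : (inner ℂ u' w' : ℂ) = 0 := orth_ker_eig T hTn lam hlam hTu' hTw'
    -- scaling
    set a : ℝ := ‖w'‖ * Real.sqrt (1 / t ^ 2 - 1) / ‖u'‖ with hadef
    have ha0 : 0 ≤ a := by positivity
    set u : EuclideanSpace ℂ (Fin n) := (a : ℂ) • u' with hudef
    set x : EuclideanSpace ℂ (Fin n) := u + w' with hxdef
    have hTu : T u = 0 := by rw [hudef, _root_.map_smul, hTu', smul_zero]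
    have hTx : T x = lam • w' := by rw [hxdef, map_add, hTu, zero_add, hTw']
    have horth : (inner ℂ u w' : ℂ) = 0 := by
      rw [hudef, inner_smul_left, horth0, mul_zero]
    have hxne : x ≠ 0 := by
      intro h
      apply hw'ne
      have := hTx
      rw [h, map_zero] at this
      exact (smul_eq_zero.mp this.symm).resolve_left hlam
    -- norm computation
    have hnx : ‖x‖ = ‖w'‖ / t := by
      have hu'pos : (0:ℝ) < ‖u'‖ := norm_pos_iff.mpr hu'ne
      have hua : ‖u‖ = a * ‖u'‖ := by
        rw [hudef, norm_smul]
        simp [abs_of_nonneg ha0]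
      have haun : a * ‖u'‖ = ‖w'‖ * Real.sqrt (1 / t ^ 2 - 1) := by
        rw [hadef, div_mul_cancel₀ _ (ne_of_gt hu'pos)]
      have h2 := hpyth u w' horth
      rw [← hxdef, hua, haun] at h2
      exact sq_eq' (norm_nonneg x) (div_nonneg (norm_nonneg w') ht0.le)
        (h2.trans (aux_t ht0 ht1 ‖w'‖))
    refine ⟨x, ?_, ?_⟩
    · rw [hTA, hTx]
      simp [smul_eq_zero, hlam, hw'ne]
    · have hfN := key A lam hlam horth hw'ne (hxdef ▸ hxne) (by rw [hTA, ← hxdef, hTx])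
      rw [← hxdef] at hfN
      rw [hfN, hnx]
      have hw'pos : (0:ℝ) < ‖w'‖ := norm_pos_iff.mpr hw'ne
      rw [div_self_div' (ne_of_gt hw'pos) (ne_of_gt ht0)]
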